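/- Let d ≥ 1 and let I = {m_1, …, m_N} ⊂ ℤ^d∖{0} be a finite set satisfying the connectedness condition. Then for all integers a_1, …, a_N ∈ ℤ, the functions c_{a_1 m_1 + … + a_N m_N} and s_{a_1 m_1 + … + a_N m_N} belong to H_∞(I). -/

import Mathlib

open Real MeasureTheory

/-- ⟨x, m⟩ = ∑ x_j m_j for x ∈ ℝ^d, m ∈ ℤ^d. -/
noncomputable def ip (d : ℕ) (x : Fin d → ℝ) (m : Fin d → ℤ) : ℝ :=
  ∑ j, x j * (m j : ℝ)

/-- Integer inner product on ℤ^d. -/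
def ipZ (d : ℕ) (m l : Fin d → ℤ) : ℤ := ∑ j, m j * l j

/-- c_m(x) = cos⟨x,m⟩. -/
noncomputable def cmap (d : ℕ) (m : Fin d → ℤ) : (Fin d → ℝ) → ℝ :=
  fun x => Real.cos (ip d x m)

/-- s_m(x) = sin⟨x,m⟩. -/
noncomputable def smap (d : ℕ) (m : Fin d → ℤ) : (Fin d → ℝ) → ℝ :=
  fun x => Real.sin (ip d x m)

/-- B(φ)(x) = ∑_j (∂_{x_j} φ(x))². -/
noncomputable def Bop (d : ℕ) (φ : (Fin d → ℝ) → ℝ) : (Fin d → ℝ) → ℝ :=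
  fun x => ∑ j, (fderiv ℝ φ x (Pi.single j 1)) ^ 2

/-- Functions representable as θ₀ − ∑_{j=1}^n B(θ_j) with θ's in H, n ≥ 1. -/
noncomputable def BRep (d : ℕ) (H : Set ((Fin d → ℝ) → ℝ)) : Set ((Fin d → ℝ) → ℝ) :=
  { f | ∃ n : ℕ, 1 ≤ n ∧ ∃ θ₀ ∈ H, ∃ θ : Fin n → (Fin d → ℝ) → ℝ,
      (∀ j, θ j ∈ H) ∧ f = θ₀ - ∑ j, Bop d (θ j) }

/-- F(H): f such that both f and −f are representable. -/
noncomputable def Fop (d : ℕ) (H : Set ((Fin d → ℝ) → ℝ)) : Set ((Fin d → ℝ) → ℝ) :=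
  { f | f ∈ BRep d H ∧ -f ∈ BRep d H }

/-- H(I): span of {1} ∪ {c_k, s_k : k ∈ I}. -/
noncomputable def H0 (d : ℕ) (I : Finset (Fin d → ℤ)) : Set ((Fin d → ℝ) → ℝ) :=
  ↑(Submodule.span ℝ
      ({fun _ => (1:ℝ)} ∪ ⋃ k ∈ (I : Set (Fin d → ℤ)), {cmap d k, smap d k}))

noncomputable def HSeq (d : ℕ) (I : Finset (Fin d → ℤ)) : ℕ → Set ((Fin d → ℝ) → ℝ)
  | 0 => H0 d I
  | j + 1 => Fop d (HSeq d I j)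

/-- H_∞(I) = ⋃_j H_j(I). -/
noncomputable def Hinf (d : ℕ) (I : Finset (Fin d → ℤ)) : Set ((Fin d → ℝ) → ℝ) :=
  ⋃ j, HSeq d I j

/-- I generates ℤ^d over ℤ. -/
def IsGenerator (d : ℕ) (I : Finset (Fin d → ℤ)) : Prop :=
  ∀ n : Fin d → ℤ, ∃ a : (Fin d → ℤ) → ℤ, n = ∑ k ∈ I, a k • k

/-- Connectedness condition of Proposition 2.5. -/
def ConnectedSet (d : ℕ) (I : Finset (Fin d → ℤ)) : Prop :=
  ∀ l ∈ I, ∀ m ∈ I, ∃ k : ℕ, ∃ n : Fin (k + 1) → (Fin d → ℤ),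
    (∀ j, n j ∈ I) ∧ ipZ d l (n 0) ≠ 0 ∧
    (∀ j : Fin k, ipZ d (n j.castSucc) (n j.succ) ≠ 0) ∧
    ipZ d (n (Fin.last k)) m ≠ 0

/-- (2πℤ^d)-periodicity for real-valued functions. -/
def Periodic2pi (d : ℕ) (f : (Fin d → ℝ) → ℝ) : Prop :=
  ∀ (x : Fin d → ℝ) (k : Fin d → ℤ), f (x + fun j => 2 * Real.pi * (k j : ℝ)) = f x

-- analytic core dev
section Aux
variable {d : ℕ}

noncomputable def ipL (d : ℕ) (m : Fin d → ℤ) : (Fin d → ℝ) →L[ℝ] ℝ :=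
  ∑ j, (m j : ℝ) • (ContinuousLinearMap.proj j : ((Fin d → ℝ) →L[ℝ] ℝ))

lemma ipL_apply (m : Fin d → ℤ) (x : Fin d → ℝ) : ipL d m x = ip d x m := by
  simp [ipL, ip, ContinuousLinearMap.sum_apply, mul_comm]

lemma ipL_single (m : Fin d → ℤ) (j : Fin d) : ipL d m (Pi.single j 1) = (m j : ℝ) := by
  simp [ipL, ContinuousLinearMap.sum_apply, Pi.single_apply]

lemma hasFDerivAt_cmap (m : Fin d → ℤ) (x : Fin d → ℝ) :
    HasFDerivAt (cmap d m) ((-Real.sin (ip d x m)) • ipL d m) x := by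
  have h1 : HasFDerivAt (ipL d m) (ipL d m) x := (ipL d m).hasFDerivAt
  have h2 := (Real.hasDerivAt_cos (ipL d m x)).comp_hasFDerivAt x h1
  have : cmap d m = fun y => Real.cos (ipL d m y) := by
    funext y; rw [cmap, ipL_apply]
  rw [this, ← ipL_apply m x]
  exact h2

lemma hasFDerivAt_smap (m : Fin d → ℤ) (x : Fin d → ℝ) :
    HasFDerivAt (smap d m) ((Real.cos (ip d x m)) • ipL d m) x := by
  have h1 : HasFDerivAt (ipL d m) (ipL d m) x := (ipL d m).hasFDerivAt
  have h2 := (Real.hasDerivAt_sin (ipL d m x)).comp_hasFDerivAt x h1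
  have : smap d m = fun y => Real.sin (ipL d m y) := by
    funext y; rw [smap, ipL_apply]
  rw [this, ← ipL_apply m x]
  exact h2

end Aux
section Aux2
variable {d : ℕ}

lemma ipZ_cast (m l : Fin d → ℤ) : ((ipZ d m l : ℤ) : ℝ) = ∑ j, (m j : ℝ) * (l j : ℝ) := by
  simp [ipZ]

lemma Bop_combo (m l : Fin d → ℤ) (A B C D : ℝ) :
    Bop d (fun x => A * Real.cos (ip d x m) + B * Real.sin (ip d x m)
      + (C * Real.cos (ip d x l) + D * Real.sin (ip d x l))) =
    fun x =>
      (ipZ d m m : ℝ) * (B * Real.cos (ip d x m) - A * Real.sin (ip d x m)) ^ 2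
      + (ipZ d m l : ℝ) * ((B * Real.cos (ip d x m) - A * Real.sin (ip d x m))
          * (D * Real.cos (ip d x l) - C * Real.sin (ip d x l)) * 2)
      + (ipZ d l l : ℝ) * (D * Real.cos (ip d x l) - C * Real.sin (ip d x l)) ^ 2 := by
  funext x
  set P := B * Real.cos (ip d x m) - A * Real.sin (ip d x m) with hP
  set Q := D * Real.cos (ip d x l) - C * Real.sin (ip d x l) with hQ
  have hθ : HasFDerivAt (fun x => A * Real.cos (ip d x m) + B * Real.sin (ip d x m)
      + (C * Real.cos (ip d x l) + D * Real.sin (ip d x l)))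
      (P • ipL d m + Q • ipL d l) x := by
    have h1 := ((hasFDerivAt_cmap m x).const_mul A).add ((hasFDerivAt_smap m x).const_mul B)
    have h2 := ((hasFDerivAt_cmap l x).const_mul C).add ((hasFDerivAt_smap l x).const_mul D)
    have h3 := h1.add h2
    have : (A • (-Real.sin (ip d x m) • ipL d m) + B • (Real.cos (ip d x m) • ipL d m))
        + (C • (-Real.sin (ip d x l) • ipL d l) + D • (Real.cos (ip d x l) • ipL d l))
        = P • ipL d m + Q • ipL d l := by
      rw [hP, hQ]; ext v
      simp [ContinuousLinearMap.add_apply, ContinuousLinearMap.smul_apply, smul_eq_mul]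
      ring
    rw [this] at h3
    exact h3
  rw [Bop, hθ.fderiv]
  have key : ∀ j, ((P • ipL d m + Q • ipL d l) (Pi.single j 1)) ^ 2
      = (m j : ℝ) * (m j : ℝ) * P ^ 2 + ((m j : ℝ) * (l j : ℝ)) * (P * Q * 2)
        + (l j : ℝ) * (l j : ℝ) * Q ^ 2 := by
    intro j
    simp [ContinuousLinearMap.add_apply, ContinuousLinearMap.smul_apply, smul_eq_mul,
      ipL_single]
    ring
  rw [Finset.sum_congr rfl (fun j _ => key j)]
  rw [Finset.sum_add_distrib, Finset.sum_add_distrib, ← Finset.sum_mul, ← Finset.sum_mul,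
    ← Finset.sum_mul, ipZ_cast, ipZ_cast, ipZ_cast]

lemma ip_add (x : Fin d → ℝ) (m l : Fin d → ℤ) : ip d x (m + l) = ip d x m + ip d x l := by
  simp [ip, Finset.sum_add_distrib, mul_add]

lemma identA (m l : Fin d → ℤ) (ε : ℝ) :
    Bop d (smap d m + ε • smap d l) + Bop d (cmap d m - ε • cmap d l)
    = (fun _ => (ipZ d m m : ℝ) + (ipZ d l l : ℝ) * ε ^ 2)
      + (2 * (ipZ d m l : ℝ) * ε) • cmap d (m + l) := by
  have h1 : smap d m + ε • smap d l = (fun x => 0 * Real.cos (ip d x m) + 1 * Real.sin (ip d x m)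
      + (0 * Real.cos (ip d x l) + ε * Real.sin (ip d x l))) := by
    funext x; simp [smap]
  have h2 : cmap d m - ε • cmap d l = (fun x => 1 * Real.cos (ip d x m) + 0 * Real.sin (ip d x m)
      + ((-ε) * Real.cos (ip d x l) + 0 * Real.sin (ip d x l))) := by
    funext x; simp [cmap]; ring
  rw [h1, h2, Bop_combo, Bop_combo]
  funext x
  simp only [Pi.add_apply, Pi.smul_apply, smul_eq_mul, cmap, ip_add, Real.cos_add]
  linear_combination (ipZ d m m : ℝ) * Real.sin_sq_add_cos_sq (ip d x m)
    + (ipZ d l l : ℝ) * ε ^ 2 * Real.sin_sq_add_cos_sq (ip d x l)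

end Aux2
section Aux3
variable {d : ℕ}

lemma identB (m l : Fin d → ℤ) (ε : ℝ) :
    Bop d (cmap d m + ε • smap d l) + Bop d (smap d m + ε • cmap d l)
    = (fun _ => (ipZ d m m : ℝ) + (ipZ d l l : ℝ) * ε ^ 2)
      + (-(2 * (ipZ d m l : ℝ) * ε)) • smap d (m + l) := by
  have h1 : cmap d m + ε • smap d l = (fun x => 1 * Real.cos (ip d x m) + 0 * Real.sin (ip d x m)
      + (0 * Real.cos (ip d x l) + ε * Real.sin (ip d x l))) := by
    funext x; simp [cmap, smap]
  have h2 : smap d m + ε • cmap d l = (fun x => 0 * Real.cos (ip d x m) + 1 * Real.sin (ip d x m)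
      + (ε * Real.cos (ip d x l) + 0 * Real.sin (ip d x l))) := by
    funext x; simp [cmap, smap]
  rw [h1, h2, Bop_combo, Bop_combo]
  funext x
  simp only [Pi.add_apply, Pi.smul_apply, smul_eq_mul, smap, ip_add, Real.sin_add]
  linear_combination (ipZ d m m : ℝ) * Real.sin_sq_add_cos_sq (ip d x m)
    + (ipZ d l l : ℝ) * ε ^ 2 * Real.sin_sq_add_cos_sq (ip d x l)

end Aux3
section Aux4
variable {d : ℕ}

def GoodH (d : ℕ) (H : Set ((Fin d → ℝ) → ℝ)) : Prop :=
  (∀ f ∈ H, ∀ g ∈ H, f + g ∈ H) ∧ (∀ (c : ℝ), ∀ f ∈ H, c • f ∈ H) ∧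
    (fun _ => (1:ℝ)) ∈ H

lemma GoodH.const {H : Set ((Fin d → ℝ) → ℝ)} (hH : GoodH d H) (c : ℝ) :
    (fun _ => c) ∈ H := by
  have := hH.2.1 c _ hH.2.2
  convert this using 1
  funext x; simp

lemma GoodH.zero_mem {H : Set ((Fin d → ℝ) → ℝ)} (hH : GoodH d H) :
    (0 : (Fin d → ℝ) → ℝ) ∈ H := by
  have := hH.const 0; convert this using 1; rfl

lemma GoodH.sub_mem {H : Set ((Fin d → ℝ) → ℝ)} (hH : GoodH d H) {f g : (Fin d → ℝ) → ℝ}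
    (hf : f ∈ H) (hg : g ∈ H) : f - g ∈ H := by
  have := hH.1 f hf _ (hH.2.1 (-1) g hg)
  convert this using 1
  funext x; simp; ring

lemma Bop_zero : Bop d (0 : (Fin d → ℝ) → ℝ) = 0 := by
  funext x
  have : (0 : (Fin d → ℝ) → ℝ) = fun _ => (0:ℝ) := rfl
  simp [Bop, this, fderiv_const]

lemma mem_BRep_self {H : Set ((Fin d → ℝ) → ℝ)} (hH : GoodH d H) {f : (Fin d → ℝ) → ℝ}
    (hf : f ∈ H) : f ∈ BRep d H := by
  refine ⟨1, le_refl 1, f, hf, fun _ => 0, fun _ => hH.zero_mem, ?_⟩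
  simp [Bop_zero]

lemma mem_Fop_of_mem {H : Set ((Fin d → ℝ) → ℝ)} (hH : GoodH d H) {f : (Fin d → ℝ) → ℝ}
    (hf : f ∈ H) : f ∈ Fop d H :=
  ⟨mem_BRep_self hH hf, mem_BRep_self hH (by simpa using hH.2.1 (-1) f hf)⟩

lemma mem_BRep_two {H : Set ((Fin d → ℝ) → ℝ)} {θ₀ θ₁ θ₂ f : (Fin d → ℝ) → ℝ}
    (h0 : θ₀ ∈ H) (h1 : θ₁ ∈ H) (h2 : θ₂ ∈ H)
    (hf : f = θ₀ - (Bop d θ₁ + Bop d θ₂)) : f ∈ BRep d H := by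
  refine ⟨2, by norm_num, θ₀, h0, ![θ₁, θ₂], ?_, ?_⟩
  · intro j; fin_cases j <;> simpa
  · rw [hf, Fin.sum_univ_two]; simp

end Aux4
section Aux5
variable {d : ℕ}

lemma BRep.add {H : Set ((Fin d → ℝ) → ℝ)} {f g : (Fin d → ℝ) → ℝ}
    (hH : GoodH d H) (hf : f ∈ BRep d H) (hg : g ∈ BRep d H) : f + g ∈ BRep d H := by
  obtain ⟨n, hn, θ₀, h0, θ, hθ, hfe⟩ := hf
  obtain ⟨n', hn', φ₀, h0', φ, hφ, hge⟩ := hg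
  refine ⟨n + n', by omega, θ₀ + φ₀, hH.1 _ h0 _ h0', Fin.append θ φ, ?_, ?_⟩
  · intro j
    refine Fin.addCases (fun i => ?_) (fun i => ?_) j
    · rw [Fin.append_left]; exact hθ i
    · rw [Fin.append_right]; exact hφ i
  · have hsum : (∑ j : Fin (n + n'), Bop d (Fin.append θ φ j))
        = (∑ j : Fin n, Bop d (θ j)) + ∑ j : Fin n', Bop d (φ j) := by
      rw [Fin.sum_univ_add]
      congr 1
      · exact Finset.sum_congr rfl fun i _ => by rw [Fin.append_left]
      · exact Finset.sum_congr rfl fun i _ => by rw [Fin.append_right]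
    rw [hsum, hfe, hge]; abel

lemma fderiv_smul_of_ne_zero {f : (Fin d → ℝ) → ℝ} {c : ℝ} (hc : c ≠ 0) (x : Fin d → ℝ) :
    fderiv ℝ (c • f) x = c • fderiv ℝ f x := by
  by_cases h : DifferentiableAt ℝ f x
  · have := fderiv_const_smul (𝕜 := ℝ) h c
    convert this using 2
  · have h2 : ¬ DifferentiableAt ℝ (c • f) x := by
      intro h2
      apply h
      have h3 : DifferentiableAt ℝ (c⁻¹ • (c • f)) x := h2.const_smul c⁻¹
      have he : c⁻¹ • (c • f) = f := by
        funext y; simp only [Pi.smul_apply, smul_eq_mul]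
        rw [inv_mul_cancel_left₀ hc]
      rwa [he] at h3
    rw [fderiv_zero_of_not_differentiableAt h, fderiv_zero_of_not_differentiableAt h2,
      smul_zero]

lemma Bop_smul (f : (Fin d → ℝ) → ℝ) (c : ℝ) (hc : c ≠ 0) :
    Bop d (c • f) = (c ^ 2) • Bop d f := by
  funext x
  simp only [Bop, fderiv_smul_of_ne_zero hc, Pi.smul_apply, smul_eq_mul,
    ContinuousLinearMap.smul_apply, Finset.mul_sum]
  exact Finset.sum_congr rfl fun j _ => by ring

lemma BRep.smul_nonneg {H : Set ((Fin d → ℝ) → ℝ)} {f : (Fin d → ℝ) → ℝ} {c : ℝ}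
    (hH : GoodH d H) (hc : 0 ≤ c) (hf : f ∈ BRep d H) : c • f ∈ BRep d H := by
  rcases eq_or_lt_of_le hc with rfl | hc'
  · have : (0:ℝ) • f = 0 := by funext x; simp
    rw [this]
    exact mem_BRep_self hH hH.zero_mem
  · obtain ⟨n, hn, θ₀, h0, θ, hθ, hfe⟩ := hf
    have hs : Real.sqrt c ≠ 0 := by positivity
    refine ⟨n, hn, c • θ₀, hH.2.1 c _ h0, fun j => Real.sqrt c • θ j,
      fun j => hH.2.1 _ _ (hθ j), ?_⟩
    have : ∀ j : Fin n, Bop d (Real.sqrt c • θ j) = c • Bop d (θ j) := by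
      intro j
      rw [Bop_smul _ _ hs, Real.sq_sqrt hc]
    rw [Finset.sum_congr rfl fun j _ => this j, hfe, ← Finset.smul_sum]
    funext x; simp; ring

lemma Fop.good {H : Set ((Fin d → ℝ) → ℝ)} (hH : GoodH d H) : GoodH d (Fop d H) := by
  refine ⟨?_, ?_, mem_Fop_of_mem hH hH.2.2⟩
  · rintro f ⟨hf1, hf2⟩ g ⟨hg1, hg2⟩
    refine ⟨BRep.add hH hf1 hg1, ?_⟩
    have : -(f + g) = -f + -g := by abel
    rw [this]; exact BRep.add hH hf2 hg2
  · rintro c f ⟨hf1, hf2⟩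
    rcases le_or_gt 0 c with hc | hc
    · refine ⟨BRep.smul_nonneg hH hc hf1, ?_⟩
      have : -(c • f) = c • (-f) := by rw [smul_neg]
      rw [this]; exact BRep.smul_nonneg hH hc hf2
    · have h1 : c • f = (-c) • (-f) := by rw [neg_smul, smul_neg, neg_neg]
      have h2 : -(c • f) = (-c) • f := by rw [neg_smul]
      exact ⟨h1 ▸ BRep.smul_nonneg hH (by linarith) hf2,
        h2 ▸ BRep.smul_nonneg hH (by linarith) hf1⟩

lemma good_H0 (I : Finset (Fin d → ℤ)) : GoodH d (H0 d I) := by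
  refine ⟨fun f hf g hg => ?_, fun c f hf => ?_, ?_⟩
  · exact Submodule.add_mem _ hf hg
  · exact Submodule.smul_mem _ c hf
  · exact Submodule.subset_span (Or.inl rfl)

lemma good_HSeq (I : Finset (Fin d → ℤ)) : ∀ j, GoodH d (HSeq d I j)
  | 0 => good_H0 I
  | j + 1 => Fop.good (good_HSeq I j)

lemma HSeq_subset_succ (I : Finset (Fin d → ℤ)) (j : ℕ) :
    HSeq d I j ⊆ HSeq d I (j + 1) :=
  fun _ hf => mem_Fop_of_mem (good_HSeq I j) hf

lemma HSeq_mono (I : Finset (Fin d → ℤ)) {j j' : ℕ} (h : j ≤ j') :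
    HSeq d I j ⊆ HSeq d I j' := by
  induction j' with
  | zero => simpa [Nat.le_zero.mp h]
  | succ k ih =>
    rcases Nat.lt_or_ge j (k+1) with h' | h'
    · exact fun f hf => HSeq_subset_succ I k (ih (by omega) hf)
    · have : j = k + 1 := by omega
      subst this; exact fun f hf => hf

lemma mem_Hinf_iff (I : Finset (Fin d → ℤ)) (f : (Fin d → ℝ) → ℝ) :
    f ∈ Hinf d I ↔ ∃ j, f ∈ HSeq d I j := Set.mem_iUnion

end Aux5
section Aux6
variable {d : ℕ}

lemma cmap_add_mem_Fop {H : Set ((Fin d → ℝ) → ℝ)} (hH : GoodH d H) {m l : Fin d → ℤ}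
    (hp : (ipZ d m l : ℝ) ≠ 0)
    (hcm : cmap d m ∈ H) (hsm : smap d m ∈ H) (hcl : cmap d l ∈ H) (hsl : smap d l ∈ H) :
    cmap d (m + l) ∈ Fop d H := by
  set p : ℝ := (ipZ d m l : ℝ)
  have key : ∀ δ : ℝ, δ = 1 ∨ δ = -1 → δ • cmap d (m + l) ∈ BRep d H := by
    intro δ hδ
    set ε : ℝ := -δ / (2 * p) with hε
    have hcoef : 2 * p * ε = -δ := by rw [hε]; field_simp
    refine mem_BRep_two (hH.const ((ipZ d m m : ℝ) + (ipZ d l l : ℝ) * ε ^ 2))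
      (hH.1 _ hsm _ (hH.2.1 ε _ hsl)) (hH.sub_mem hcm (hH.2.1 ε _ hcl)) ?_
    have hA := identA m l ε
    funext x
    have := congrFun hA x
    simp only [Pi.add_apply, Pi.smul_apply, smul_eq_mul, Pi.sub_apply] at this ⊢
    rw [this, hcoef]
    ring
  have h1 := key 1 (Or.inl rfl)
  have h2 := key (-1) (Or.inr rfl)
  rw [one_smul] at h1
  refine ⟨h1, ?_⟩
  have : -(cmap d (m + l)) = (-1 : ℝ) • cmap d (m + l) := by
    funext x; simp
  rwa [this]

lemma smap_add_mem_Fop {H : Set ((Fin d → ℝ) → ℝ)} (hH : GoodH d H) {m l : Fin d → ℤ}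
    (hp : (ipZ d m l : ℝ) ≠ 0)
    (hcm : cmap d m ∈ H) (hsm : smap d m ∈ H) (hcl : cmap d l ∈ H) (hsl : smap d l ∈ H) :
    smap d (m + l) ∈ Fop d H := by
  set p : ℝ := (ipZ d m l : ℝ)
  have key : ∀ δ : ℝ, δ = 1 ∨ δ = -1 → δ • smap d (m + l) ∈ BRep d H := by
    intro δ hδ
    set ε : ℝ := δ / (2 * p) with hε
    have hcoef : 2 * p * ε = δ := by rw [hε]; field_simp
    refine mem_BRep_two (hH.const ((ipZ d m m : ℝ) + (ipZ d l l : ℝ) * ε ^ 2))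
      (hH.1 _ hcm _ (hH.2.1 ε _ hsl)) (hH.1 _ hsm _ (hH.2.1 ε _ hcl)) ?_
    have hB := identB m l ε
    funext x
    have := congrFun hB x
    simp only [Pi.add_apply, Pi.smul_apply, smul_eq_mul, Pi.sub_apply, Pi.neg_apply] at this ⊢
    rw [this, hcoef]
    ring
  have h1 := key 1 (Or.inl rfl)
  have h2 := key (-1) (Or.inr rfl)
  rw [one_smul] at h1
  refine ⟨h1, ?_⟩
  have : -(smap d (m + l)) = (-1 : ℝ) • smap d (m + l) := by
    funext x; simp
  rwa [this]

end Aux6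
section Aux7
variable {d : ℕ}

lemma ipZ_add_left (x y z : Fin d → ℤ) : ipZ d (x + y) z = ipZ d x z + ipZ d y z := by
  simp [ipZ, add_mul, Finset.sum_add_distrib]

lemma ipZ_smul_left (a : ℤ) (x y : Fin d → ℤ) : ipZ d (a • x) y = a * ipZ d x y := by
  simp [ipZ, Finset.mul_sum, mul_assoc]

lemma ipZ_comm (x y : Fin d → ℤ) : ipZ d x y = ipZ d y x := by
  simp [ipZ, mul_comm]

lemma ipZ_add_right (x y z : Fin d → ℤ) : ipZ d x (y + z) = ipZ d x y + ipZ d x z := by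
  rw [ipZ_comm, ipZ_add_left, ipZ_comm y x, ipZ_comm z x]

lemma ipZ_smul_right (a : ℤ) (x y : Fin d → ℤ) : ipZ d x (a • y) = a * ipZ d x y := by
  rw [ipZ_comm, ipZ_smul_left, ipZ_comm y x]

lemma ipZ_neg_right (x y : Fin d → ℤ) : ipZ d x (-y) = -ipZ d x y := by
  have : -y = (-1 : ℤ) • y := by funext j; simp
  rw [this, ipZ_smul_right]; ring

lemma ipZ_self_nonneg (x : Fin d → ℤ) : 0 ≤ ipZ d x x :=
  Finset.sum_nonneg fun j _ => mul_self_nonneg _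

lemma ipZ_self_ne_zero {x : Fin d → ℤ} (hx : x ≠ 0) : ipZ d x x ≠ 0 := by
  intro h
  apply hx
  funext j
  have h2 := (Finset.sum_eq_zero_iff_of_nonneg (fun i _ => mul_self_nonneg (x i))).mp h j
    (Finset.mem_univ j)
  have := mul_self_eq_zero.mp h2
  simpa using this

def Sset (d : ℕ) (I : Finset (Fin d → ℤ)) : Set (Fin d → ℤ) :=
  {m | cmap d m ∈ Hinf d I ∧ smap d m ∈ Hinf d I}

lemma ip_zero (x : Fin d → ℝ) : ip d x (0 : Fin d → ℤ) = 0 := by simp [ip]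

lemma zero_mem_Sset (I : Finset (Fin d → ℤ)) : (0 : Fin d → ℤ) ∈ Sset d I := by
  constructor
  · have : cmap d 0 = fun _ => (1:ℝ) := by funext x; simp [cmap, ip_zero]
    rw [this, mem_Hinf_iff]
    exact ⟨0, (good_H0 I).2.2⟩
  · have : smap d 0 = (0 : (Fin d → ℝ) → ℝ) := by funext x; simp [smap, ip_zero]
    rw [this, mem_Hinf_iff]
    exact ⟨0, (good_H0 I).zero_mem⟩

lemma I_mem_Sset {I : Finset (Fin d → ℤ)} {k : Fin d → ℤ} (hk : k ∈ I) : k ∈ Sset d I := by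
  constructor <;> rw [mem_Hinf_iff] <;> refine ⟨0, Submodule.subset_span (Or.inr ?_)⟩ <;>
    rw [Set.mem_iUnion₂] <;> exact ⟨k, hk, by simp⟩

lemma neg_mem_Sset {I : Finset (Fin d → ℤ)} {m : Fin d → ℤ} (hm : m ∈ Sset d I) :
    (-m) ∈ Sset d I := by
  have hip : ∀ x, ip d x (-m) = -(ip d x m) := by
    intro x; simp [ip]
  obtain ⟨hc, hs⟩ := hm
  constructor
  · have : cmap d (-m) = cmap d m := by funext x; simp [cmap, hip]
    rwa [this]
  · have : smap d (-m) = (-1 : ℝ) • smap d m := by funext x; simp [smap, hip]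
    rw [this, mem_Hinf_iff] at *
    obtain ⟨j, hj⟩ := hs
    exact ⟨j, (good_HSeq I j).2.1 (-1) _ hj⟩

lemma add_mem_Sset {I : Finset (Fin d → ℤ)} {m l : Fin d → ℤ}
    (hm : m ∈ Sset d I) (hl : l ∈ Sset d I) (hp : ipZ d m l ≠ 0) :
    m + l ∈ Sset d I := by
  obtain ⟨hc, hs⟩ := hm
  obtain ⟨hc', hs'⟩ := hl
  rw [mem_Hinf_iff] at hc hs hc' hs'
  obtain ⟨j1, h1⟩ := hc
  obtain ⟨j2, h2⟩ := hs
  obtain ⟨j3, h3⟩ := hc'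
  obtain ⟨j4, h4⟩ := hs'
  set j := max (max j1 j2) (max j3 j4)
  have e1 : cmap d m ∈ HSeq d I j := HSeq_mono I (by omega) h1
  have e2 : smap d m ∈ HSeq d I j := HSeq_mono I (by omega) h2
  have e3 : cmap d l ∈ HSeq d I j := HSeq_mono I (by omega) h3
  have e4 : smap d l ∈ HSeq d I j := HSeq_mono I (by omega) h4
  have hpR : (ipZ d m l : ℝ) ≠ 0 := Int.cast_ne_zero.mpr hp
  have hg := good_HSeq I j
  constructor <;> rw [mem_Hinf_iff]
  · exact ⟨j + 1, cmap_add_mem_Fop hg hpR e1 e2 e3 e4⟩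
  · exact ⟨j + 1, smap_add_mem_Fop hg hpR e1 e2 e3 e4⟩

end Aux7
section Aux8
variable {d : ℕ} {I : Finset (Fin d → ℤ)}

lemma multiples_mem_Sset {n : Fin d → ℤ} (hn : n ∈ Sset d I) (hn0 : n ≠ 0) :
    ∀ a : ℤ, a • n ∈ Sset d I := by
  have hnat : ∀ a : ℕ, (a : ℤ) • n ∈ Sset d I := by
    intro a
    induction a with
    | zero => simpa using zero_mem_Sset I
    | succ b ih =>
      rcases Nat.eq_zero_or_pos b with rfl | hb
      · simpa using hn
      · have hip : ipZ d ((b : ℤ) • n) n ≠ 0 := by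
          rw [ipZ_smul_left]
          exact mul_ne_zero (by exact_mod_cast hb.ne') (ipZ_self_ne_zero hn0)
        have := add_mem_Sset ih hn hip
        have he : ((b : ℤ) + 1) • n = (b : ℤ) • n + n := by rw [add_smul, one_smul]
        rw [show ((b + 1 : ℕ) : ℤ) = (b : ℤ) + 1 by push_cast; ring, he]
        exact this
  intro a
  rcases le_or_gt 0 a with ha | ha
  · obtain ⟨b, rfl⟩ := Int.eq_ofNat_of_zero_le ha
    exact hnat b
  · have h1 : ((-a).toNat : ℤ) • n ∈ Sset d I := hnat _
    have h2 := neg_mem_Sset h1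
    have he : a • n = -((((-a).toNat : ℤ)) • n) := by
      rw [← neg_smul]
      congr 1
      omega
    rw [he]
    exact h2
end Aux8
section Aux9
variable {d : ℕ} {I : Finset (Fin d → ℤ)}

lemma jump_mem_Sset {m n : Fin d → ℤ} (hm : m ∈ Sset d I) (hn : n ∈ Sset d I)
    (hn0 : n ≠ 0) (hip : ipZ d m n ≠ 0) : ∀ a : ℤ, m + a • n ∈ Sset d I := by
  have key : ∀ (m n : Fin d → ℤ), m ∈ Sset d I → n ∈ Sset d I → n ≠ 0 → ipZ d m n ≠ 0 →
      ∀ a : ℕ, m + (a : ℤ) • n ∈ Sset d I := by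
    intro m n hm hn hn0 hip a
    have Q : ∀ b : ℕ, m + (b : ℤ) • n ∈ Sset d I ∧ m + ((b : ℤ) + 1) • n ∈ Sset d I := by
      intro b
      induction b with
      | zero =>
        refine ⟨by simpa using hm, ?_⟩
        have := add_mem_Sset hm hn hip
        simpa using this
      | succ b ih =>
        obtain ⟨ihb, ihb1⟩ := ih
        refine ⟨by rw [show ((b+1:ℕ):ℤ) = (b:ℤ)+1 by push_cast; ring]; exact ihb1, ?_⟩
        rw [show ((b+1:ℕ):ℤ)+1 = (b:ℤ)+2 by push_cast; ring]
        by_cases h : ipZ d (m + ((b:ℤ)+1) • n) n = 0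
        · -- jump over using 2 • n from position b
          have hb : ipZ d (m + (b:ℤ) • n) n = -(ipZ d n n) := by
            have e1 : ipZ d (m + ((b:ℤ)+1) • n) n
                = ipZ d (m + (b:ℤ) • n) n + ipZ d n n := by
              rw [show m + ((b:ℤ)+1) • n = (m + (b:ℤ) • n) + n by rw [add_smul, one_smul]; abel]
              rw [ipZ_add_left]
            omega
          have h2n : (2:ℤ) • n ∈ Sset d I := multiples_mem_Sset hn hn0 2
          have hip2 : ipZ d (m + (b:ℤ) • n) ((2:ℤ) • n) ≠ 0 := by
            rw [ipZ_smul_right, hb]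
            have := ipZ_self_ne_zero hn0
            intro hc; omega
          have := add_mem_Sset ihb h2n hip2
          rw [show m + (b:ℤ) • n + (2:ℤ) • n = m + ((b:ℤ)+2) • n by
            rw [add_smul]; abel] at this
          exact this
        · have := add_mem_Sset ihb1 hn h
          rw [show m + ((b:ℤ)+1) • n + n = m + ((b:ℤ)+2) • n by
            rw [show ((b:ℤ)+2) = ((b:ℤ)+1)+1 by ring, add_smul ((b:ℤ)+1) 1, one_smul]; abel] at this
          exact this
    exact (Q a).1
  intro a
  rcases le_or_gt 0 a with ha | ha
  · obtain ⟨b, rfl⟩ := Int.eq_ofNat_of_zero_le ha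
    exact key m n hm hn hn0 hip b
  · have h1 : m + ((-a).toNat : ℤ) • (-n) ∈ Sset d I := by
      refine key m (-n) hm (neg_mem_Sset hn) (by simpa using hn0) ?_ _
      rw [ipZ_neg_right]; omega
    have he : m + ((-a).toNat : ℤ) • (-n) = m + a • n := by
      rw [smul_neg, ← neg_smul]
      congr 2
      omega
    rwa [he] at h1

end Aux9
section Aux10
variable {d : ℕ} {I : Finset (Fin d → ℤ)}

lemma exists_good_coeff {α β γ δ : ℤ} (hβ : β ≠ 0) (hδ : δ ≠ 0) :
    ∃ a : ℤ, α + a * β ≠ 0 ∧ γ + a * δ ≠ 0 := by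
  by_contra h
  push_neg at h
  have key : ∀ a : ℤ, α + a * β = 0 ∨ γ + a * δ = 0 := by
    intro a
    by_cases hx : α + a * β = 0
    · exact Or.inl hx
    · exact Or.inr (h a hx)
  rcases key 0 with c0 | c0 <;> rcases key 1 with c1 | c1 <;> rcases key 2 with c2 | c2 <;> omega

lemma walk_mem_Sset {kk : Fin d → ℤ} (hkk : kk ∈ Sset d I) (hkk0 : kk ≠ 0) :
    ∀ r : ℕ, ∀ q : Fin (r + 1) → (Fin d → ℤ),
      (∀ j, q j ∈ Sset d I ∧ q j ≠ 0) →
      (∀ j : Fin r, ipZ d (q j.castSucc) (q j.succ) ≠ 0) →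
      ipZ d (q (Fin.last r)) kk ≠ 0 →
      ∀ m ∈ Sset d I, ipZ d m (q 0) ≠ 0 → m + kk ∈ Sset d I := by
  intro r
  induction r with
  | zero =>
    intro q hq hc hlast m hm hm0
    have hq0 : q 0 ∈ Sset d I := (hq 0).1
    have hq0n : q 0 ≠ 0 := (hq 0).2
    have hlast' : ipZ d (q 0) kk ≠ 0 := by simpa [Fin.last] using hlast
    -- choose a : ⟨m + a q0, kk⟩ ≠ 0 and ⟨m + a q0 + kk, q0⟩ ≠ 0
    obtain ⟨a, ha1, ha2⟩ := exists_good_coeff (α := ipZ d m kk) (β := ipZ d (q 0) kk)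
      (γ := ipZ d m (q 0) + ipZ d kk (q 0)) (δ := ipZ d (q 0) (q 0))
      hlast' (ipZ_self_ne_zero hq0n)
    have h1 : m + a • q 0 ∈ Sset d I := jump_mem_Sset hm hq0 hq0n hm0 a
    have hip1 : ipZ d (m + a • q 0) kk ≠ 0 := by
      rw [ipZ_add_left, ipZ_smul_left]; exact ha1
    have h2 : m + a • q 0 + kk ∈ Sset d I := add_mem_Sset h1 hkk hip1
    have hip2 : ipZ d (m + a • q 0 + kk) (q 0) ≠ 0 := by
      rw [ipZ_add_left, ipZ_add_left, ipZ_smul_left, ipZ_comm (q 0)]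
      convert ha2 using 1
      ring
    have h3 := jump_mem_Sset h2 hq0 hq0n hip2 (-a)
    have he : m + a • q 0 + kk + (-a) • q 0 = m + kk := by
      rw [neg_smul]; abel
    rwa [he] at h3
  | succ r ih =>
    intro q hq hc hlast m hm hm0
    have hq0 : q 0 ∈ Sset d I := (hq 0).1
    have hq0n : q 0 ≠ 0 := (hq 0).2
    have hq01 : ipZ d (q 0) (q 1) ≠ 0 := by
      have := hc 0
      simpa using this
    obtain ⟨a, ha1, ha2⟩ := exists_good_coeff (α := ipZ d m (q 1)) (β := ipZ d (q 0) (q 1))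
      (γ := ipZ d m (q 0) + ipZ d kk (q 0)) (δ := ipZ d (q 0) (q 0))
      hq01 (ipZ_self_ne_zero hq0n)
    have h1 : m + a • q 0 ∈ Sset d I := jump_mem_Sset hm hq0 hq0n hm0 a
    -- apply ih to tail chain
    set q' : Fin (r + 1) → (Fin d → ℤ) := fun j => q j.succ with hq'
    have hq'1 : ∀ j, q' j ∈ Sset d I ∧ q' j ≠ 0 := fun j => hq j.succ
    have hq'2 : ∀ j : Fin r, ipZ d (q' j.castSucc) (q' j.succ) ≠ 0 := by
      intro j
      have := hc j.succ
      show ipZ d (q j.castSucc.succ) (q j.succ.succ) ≠ 0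
      rw [Fin.succ_castSucc]; exact this
    have hq'3 : ipZ d (q' (Fin.last r)) kk ≠ 0 := by
      have : q' (Fin.last r) = q (Fin.last (r+1)) := by
        show q (Fin.last r).succ = q (Fin.last (r+1))
        rw [Fin.succ_last]
      rw [this]; exact hlast
    have hq'0 : ipZ d (m + a • q 0) (q' 0) ≠ 0 := by
      have : q' 0 = q 1 := rfl
      rw [this, ipZ_add_left, ipZ_smul_left]; exact ha1
    have h2 := ih q' hq'1 hq'2 hq'3 (m + a • q 0) h1 hq'0
    have hip2 : ipZ d (m + a • q 0 + kk) (q 0) ≠ 0 := by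
      rw [ipZ_add_left, ipZ_add_left, ipZ_smul_left, ipZ_comm (q 0)]
      convert ha2 using 1
      ring
    have h3 := jump_mem_Sset h2 hq0 hq0n hip2 (-a)
    have he : m + a • q 0 + kk + (-a) • q 0 = m + kk := by
      rw [neg_smul]; abel
    rwa [he] at h3

end Aux10
section Aux11
variable {d : ℕ} {I : Finset (Fin d → ℤ)}

def inSpanI (d : ℕ) (I : Finset (Fin d → ℤ)) (m : Fin d → ℤ) : Prop :=
  ∃ b : (Fin d → ℤ) → ℤ, m = ∑ k ∈ I, b k • k

lemma inSpanI_zero : inSpanI d I 0 := ⟨0, by simp⟩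

lemma ipZ_zero_left (y : Fin d → ℤ) : ipZ d 0 y = 0 := by simp [ipZ]

lemma ipZ_sum_left {α : Type*} [DecidableEq α] (s : Finset α) (f : α → (Fin d → ℤ)) (y : Fin d → ℤ) :
    ipZ d (∑ k ∈ s, f k) y = ∑ k ∈ s, ipZ d (f k) y := by
  induction s using Finset.induction_on with
  | empty => simpa using ipZ_zero_left y
  | insert _ _ hni ih =>
    rw [Finset.sum_insert hni, Finset.sum_insert hni, ipZ_add_left, ih]

lemma inSpanI_witness {m : Fin d → ℤ} (h : inSpanI d I m) (hm : m ≠ 0) :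
    ∃ n ∈ I, ipZ d m n ≠ 0 := by
  by_contra hc
  push_neg at hc
  obtain ⟨b, hb⟩ := h
  apply ipZ_self_ne_zero hm
  conv_lhs => rw [hb]
  rw [ipZ_comm, ipZ_sum_left]
  apply Finset.sum_eq_zero
  intro k hk
  rw [ipZ_smul_left, ipZ_comm, ← hb, hc k hk, mul_zero]

lemma inSpanI_add_smul {m : Fin d → ℤ} (h : inSpanI d I m) {k : Fin d → ℤ} (hk : k ∈ I)
    (a : ℤ) : inSpanI d I (m + a • k) := by
  obtain ⟨b, rfl⟩ := h
  refine ⟨fun k' => b k' + if k' = k then a else 0, ?_⟩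
  symm
  calc ∑ k' ∈ I, (b k' + if k' = k then a else 0) • k'
      = ∑ k' ∈ I, (b k' • k' + if k' = k then a • k' else 0) := by
        refine Finset.sum_congr rfl fun k' _ => ?_
        rw [add_smul]
        congr 1
        split_ifs <;> simp
    _ = (∑ k' ∈ I, b k' • k') + ∑ k' ∈ I, (if k' = k then a • k' else 0) :=
        Finset.sum_add_distrib
    _ = (∑ k' ∈ I, b k' • k') + a • k := by
        rw [Finset.sum_ite_eq' I k (fun k' => a • k'), if_pos hk]

lemma inSpanI_neg {m : Fin d → ℤ} (h : inSpanI d I m) : inSpanI d I (-m) := by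
  obtain ⟨b, rfl⟩ := h
  refine ⟨-b, ?_⟩
  rw [← Finset.sum_neg_distrib]
  refine Finset.sum_congr rfl fun k _ => ?_
  simp [neg_smul]

lemma stepOne (hI : ∀ k ∈ I, k ≠ 0) (hconn : ConnectedSet d I) {m : Fin d → ℤ} (hm : m ∈ Sset d I)
    (hsp : inSpanI d I m) {k : Fin d → ℤ} (hk : k ∈ I) (hk0 : k ≠ 0) :
    m + k ∈ Sset d I := by
  by_cases hm0 : m = 0
  · subst hm0; simpa using I_mem_Sset hk
  obtain ⟨n, hnI, hn⟩ := inSpanI_witness hsp hm0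
  obtain ⟨r, ch, hchI, hch0, hchc, hchl⟩ := hconn n hnI k hk
  -- build q : Fin (r+2) → _ := Fin.cons n ch
  set q : Fin (r + 1 + 1) → (Fin d → ℤ) := Fin.cons n ch with hq
  have hkS : k ∈ Sset d I := I_mem_Sset hk
  refine walk_mem_Sset hkS hk0 (r + 1) q ?_ ?_ ?_ m hm ?_
  · intro j
    refine Fin.cases ?_ (fun i => ?_) j
    · rw [hq, Fin.cons_zero]
      exact ⟨I_mem_Sset hnI, hI _ hnI⟩
    · rw [hq, Fin.cons_succ]
      exact ⟨I_mem_Sset (hchI i), hI _ (hchI i)⟩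
  · intro j
    refine Fin.cases ?_ (fun i => ?_) j
    · have e0 : q (Fin.castSucc 0) = n := by rw [hq, show Fin.castSucc (0 : Fin (r+1)) = 0 from rfl, Fin.cons_zero]
      have e1 : q (Fin.succ 0) = ch 0 := by rw [hq, Fin.cons_succ]
      rw [e0, e1]; exact hch0
    · have e0 : q i.succ.castSucc = ch i.castSucc := by
        rw [hq, ← Fin.succ_castSucc, Fin.cons_succ]
      have e1 : q i.succ.succ = ch i.succ := by rw [hq, Fin.cons_succ]
      rw [e0, e1]; exact hchc i
  · have : q (Fin.last (r + 1)) = ch (Fin.last r) := by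
      rw [hq, ← Fin.succ_last, Fin.cons_succ]
    rw [this]; exact hchl
  · rw [hq, Fin.cons_zero]; exact hn

end Aux11
section Aux12
variable {d : ℕ} {I : Finset (Fin d → ℤ)}

lemma stepAny (hI : ∀ k ∈ I, k ≠ 0) (hconn : ConnectedSet d I) {m : Fin d → ℤ}
    (hm : m ∈ Sset d I) (hsp : inSpanI d I m) {k : Fin d → ℤ} (hk : k ∈ I) :
    ∀ a : ℤ, m + a • k ∈ Sset d I ∧ inSpanI d I (m + a • k) := by
  have hk0 : k ≠ 0 := hI k hk
  intro a
  induction a using Int.induction_on with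
  | zero => simpa using ⟨hm, hsp⟩
  | succ b ih =>
    obtain ⟨ih1, ih2⟩ := ih
    have h1 := stepOne hI hconn ih1 ih2 hk hk0
    have h2 := inSpanI_add_smul ih2 hk 1
    have he : m + (b : ℤ) • k + k = m + ((b : ℤ) + 1) • k := by
      rw [add_smul, one_smul]; abel
    have he2 : m + (b : ℤ) • k + (1 : ℤ) • k = m + ((b : ℤ) + 1) • k := by
      rw [one_smul]; exact he
    exact ⟨he ▸ h1, he2 ▸ h2⟩
  | pred b ih =>
    obtain ⟨ih1, ih2⟩ := ih
    have hneg1 : -(m + (-b : ℤ) • k) ∈ Sset d I := neg_mem_Sset ih1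
    have hneg2 : inSpanI d I (-(m + (-b : ℤ) • k)) := inSpanI_neg ih2
    have h1 := stepOne hI hconn hneg1 hneg2 hk hk0
    have h2 := inSpanI_add_smul hneg2 hk 1
    have h3 := neg_mem_Sset h1
    have h4 := inSpanI_neg h2
    have he : -(-(m + (-b : ℤ) • k) + k) = m + (-(b : ℤ) - 1) • k := by
      rw [sub_smul, neg_smul, one_smul]; abel
    have he2 : -(-(m + (-b : ℤ) • k) + (1:ℤ) • k) = m + (-(b : ℤ) - 1) • k := by
      rw [one_smul]; exact he
    exact ⟨he ▸ h3, he2 ▸ h4⟩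

lemma sum_mem_Sset (hI : ∀ k ∈ I, k ≠ 0) (hconn : ConnectedSet d I)
    (a : (Fin d → ℤ) → ℤ) :
    ∀ s : Finset (Fin d → ℤ), s ⊆ I → (∑ k ∈ s, a k • k) ∈ Sset d I ∧
      inSpanI d I (∑ k ∈ s, a k • k) := by
  intro s
  induction s using Finset.induction_on with
  | empty => intro _; simpa using ⟨zero_mem_Sset I, inSpanI_zero⟩
  | insert _ _ hni ih =>
    rename_i k s
    intro hsub
    have hkI : k ∈ I := hsub (Finset.mem_insert_self k s)
    have hsub' : s ⊆ I := fun x hx => hsub (Finset.mem_insert_of_mem hx)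
    obtain ⟨ih1, ih2⟩ := ih hsub'
    have := stepAny hI hconn ih1 ih2 hkI (a k)
    rw [Finset.sum_insert hni, add_comm (a k • k)]
    exact this

end Aux12

/-- if I satisfies the connectedness condition, then for all
integer coefficients a, the functions c and s of any ℤ-linear combination of
elements of I belong to H_∞(I). -/
theorem stmt7 (d : ℕ) (hd : 1 ≤ d) (I : Finset (Fin d → ℤ)) (hI : ∀ k ∈ I, k ≠ 0)
    (hconn : ConnectedSet d I) (a : (Fin d → ℤ) → ℤ) :
    cmap d (∑ k ∈ I, a k • k) ∈ Hinf d I ∧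
      smap d (∑ k ∈ I, a k • k) ∈ Hinf d I := by
  exact (sum_mem_Sset hI hconn a I (le_refl I)).1
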